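/- Let H ∈ ℂ^{N_r×N_t} have compact SVD H = U Σ Vᴴ with U ∈ ℂ^{N_r×L}, V ∈ ℂ^{N_t×L}, and let Û ∈ ℂ^{N_r×L}, V̂ ∈ ℂ^{N_t×L} be semi-unitary. Define η(Û, V̂) = ‖Ûᴴ H V̂‖_F² / tr(Hᴴ H). Then η(Û, V̂) ≥ σ_L(Ûᴴ U)² · σ_L(V̂ᴴ V)², where σ_L denotes the L-th largest (smallest) singular value of the respective L×L matrices. -/

import Mathlib

open Matrix

/-- The `i`-th largest singular value (0-indexed) of a complex matrix. -/
noncomputable def svalDesc {m n : ℕ} (A : Matrix (Fin m) (Fin n) ℂ) (i : Fin m) : ℝ :=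
  Real.sqrt ((Matrix.isHermitian_mul_conjTranspose_self A).eigenvalues
    (Tuple.sort ((Matrix.isHermitian_mul_conjTranspose_self A).eigenvalues) i.rev))

/-- The squared Frobenius norm. -/
noncomputable def frobSq {m n : Type*} [Fintype m] [Fintype n] (A : Matrix m n ℂ) : ℝ :=
  ∑ i, ∑ j, ‖A i j‖ ^ 2


lemma norm_sq_complex (z : ℂ) : z * star z = ((‖z‖ ^ 2 : ℝ) : ℂ) := by
  rw [Complex.star_def, Complex.mul_conj]
  simp [Complex.normSq_eq_norm_sq]

lemma dot_self_re {L : ℕ} (x : Fin L → ℂ) : (star x ⬝ᵥ x).re = ∑ i, ‖x i‖ ^ 2 := by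
  simp only [dotProduct, Pi.star_apply, Complex.re_sum]
  refine Finset.sum_congr rfl fun i _ => ?_
  rw [mul_comm, norm_sq_complex, Complex.ofReal_re]

lemma rayleigh_lower {L : ℕ} {M : Matrix (Fin L) (Fin L) ℂ} (hM : M.IsHermitian)
    {c : ℝ} (hc : ∀ i, c ≤ hM.eigenvalues i) (x : Fin L → ℂ) :
    c * ∑ i, ‖x i‖ ^ 2 ≤ (star x ⬝ᵥ M *ᵥ x).re := by
  set W : Matrix (Fin L) (Fin L) ℂ := (hM.eigenvectorUnitary : Matrix (Fin L) (Fin L) ℂ) with hW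
  have hWu : W ∈ Matrix.unitaryGroup (Fin L) ℂ := hM.eigenvectorUnitary.2
  set z : Fin L → ℂ := star W *ᵥ x with hz
  have hstar : star x ᵥ* W = star z := by
    rw [hz, star_mulVec, ← Matrix.star_eq_conjTranspose, star_star]
  have key : star x ⬝ᵥ M *ᵥ x = star z ⬝ᵥ (diagonal (fun i => (hM.eigenvalues i : ℂ))) *ᵥ z := by
    conv_lhs => rw [hM.spectral_theorem]; simp only [Unitary.conjStarAlgAut_apply, Unitary.coe_star]
    rw [← mulVec_mulVec, ← mulVec_mulVec, dotProduct_mulVec, hstar]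
    rfl
  have key2 : (star x ⬝ᵥ M *ᵥ x).re = ∑ i, hM.eigenvalues i * ‖z i‖ ^ 2 := by
    rw [key]
    simp only [dotProduct, mulVec_diagonal, Pi.star_apply, Complex.re_sum]
    refine Finset.sum_congr rfl fun i _ => ?_
    rw [show star (z i) * ((hM.eigenvalues i : ℂ) * z i)
        = (hM.eigenvalues i : ℂ) * (z i * star (z i)) by ring, norm_sq_complex]
    rw [← Complex.ofReal_mul, Complex.ofReal_re]
  have keynorm : ∑ i, ‖x i‖ ^ 2 = ∑ i, ‖z i‖ ^ 2 := by
    rw [← dot_self_re, ← dot_self_re]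
    congr 1
    have h1 : W * star W = 1 := (Matrix.mem_unitaryGroup_iff).mp hWu
    calc star x ⬝ᵥ x = star x ⬝ᵥ ((W * star W) *ᵥ x) := by rw [h1, one_mulVec]
      _ = star x ⬝ᵥ (W *ᵥ (star W *ᵥ x)) := by rw [mulVec_mulVec]
      _ = (star x ᵥ* W) ⬝ᵥ (star W *ᵥ x) := dotProduct_mulVec _ _ _
      _ = star z ⬝ᵥ z := by rw [hstar, hz]
  rw [key2, keynorm, Finset.mul_sum]
  exact Finset.sum_le_sum fun i _ => mul_le_mul_of_nonneg_right (hc i) (sq_nonneg _)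



lemma sval_sq_le_eig {m n : ℕ} (hm : 0 < m) (A : Matrix (Fin m) (Fin n) ℂ) (j : Fin m) :
    svalDesc A ⟨m - 1, Nat.sub_lt hm Nat.one_pos⟩ ^ 2
      ≤ (Matrix.isHermitian_mul_conjTranspose_self A).eigenvalues j := by
  set f := (Matrix.isHermitian_mul_conjTranspose_self A).eigenvalues with hf
  set σ := Tuple.sort f with hσ
  have hrev : (⟨m - 1, Nat.sub_lt hm Nat.one_pos⟩ : Fin m).rev = ⟨0, hm⟩ := by
    ext; simp [Fin.rev]; omega
  have hnn : ∀ k, 0 ≤ f k := fun k =>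
    Matrix.eigenvalues_self_mul_conjTranspose_nonneg A k
  have hsq : svalDesc A ⟨m - 1, Nat.sub_lt hm Nat.one_pos⟩ ^ 2 = f (σ ⟨0, hm⟩) := by
    rw [svalDesc, hrev, Real.sq_sqrt (hnn _)]
  rw [hsq]
  have hmono := Tuple.monotone_sort f
  calc f (σ ⟨0, hm⟩) ≤ f (σ (σ.symm j)) := hmono (by exact Fin.mk_le_mk.mpr (Nat.zero_le _) : (⟨0, hm⟩ : Fin m) ≤ σ.symm j)
    _ = f j := by rw [Equiv.apply_symm_apply]

lemma sval_nonneg {m n : ℕ} (A : Matrix (Fin m) (Fin n) ℂ) (i : Fin m) :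
    0 ≤ svalDesc A i := Real.sqrt_nonneg _

lemma transfer {L : ℕ} (A : Matrix (Fin L) (Fin L) ℂ) {c : ℝ}
    (hc : ∀ j, c ≤ (Matrix.isHermitian_mul_conjTranspose_self A).eigenvalues j) (i : Fin L) :
    c ≤ (Matrix.isHermitian_conjTranspose_mul_self A).eigenvalues i := by
  set hN := Matrix.isHermitian_conjTranspose_mul_self A with hhN
  set μ := hN.eigenvalues i with hμ
  set v : Fin L → ℂ := ⇑(hN.eigenvectorBasis i) with hv'
  have hv : (Aᴴ * A) *ᵥ v = (μ : ℂ) • v := by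
    have h := hN.mulVec_eigenvectorBasis i
    rw [hv', h]
    ext k; simp [Complex.real_smul, hμ]
  have hvne : v ≠ 0 := by
    intro h
    apply hN.eigenvectorBasis.orthonormal.ne_zero i
    ext k; exact congrFun h k
  set w := A *ᵥ v with hw'
  by_cases hw : w = 0
  · have hμ0 : μ = 0 := by
      have h0 : (μ : ℂ) • v = 0 := by
        rw [← hv, ← mulVec_mulVec, ← hw', hw, mulVec_zero]
      rcases smul_eq_zero.mp h0 with h | h
      · exact_mod_cast h
      · exact absurd h hvne
    have hdet : det (Aᴴ * A) = 0 := by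
      rw [hN.det_eq_prod_eigenvalues]
      refine Finset.prod_eq_zero (Finset.mem_univ i) ?_
      rw [← hμ, hμ0]; simp
    have hdet2 : det (A * Aᴴ) = 0 := by
      rw [det_mul] at hdet ⊢; rw [mul_comm]; exact hdet
    have hex : ∃ j, (Matrix.isHermitian_mul_conjTranspose_self A).eigenvalues j = 0 := by
      rw [(Matrix.isHermitian_mul_conjTranspose_self A).det_eq_prod_eigenvalues] at hdet2
      rcases Finset.prod_eq_zero_iff.mp hdet2 with ⟨j, _, hj⟩
      exact ⟨j, Complex.ofReal_eq_zero.mp hj⟩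
    
    rcases hex with ⟨j, hj⟩
    rw [hμ0]
    calc c ≤ _ := hc j
      _ = 0 := hj
  · have hMw : (A * Aᴴ) *ᵥ w = (μ : ℂ) • w := by
      calc (A * Aᴴ) *ᵥ (A *ᵥ v) = A *ᵥ ((Aᴴ * A) *ᵥ v) := by
            rw [mulVec_mulVec, mulVec_mulVec, mul_assoc]
        _ = A *ᵥ ((μ : ℂ) • v) := by rw [hv]
        _ = (μ : ℂ) • w := by rw [mulVec_smul]
    have h1 := rayleigh_lower (Matrix.isHermitian_mul_conjTranspose_self A) hc w
    have h2 : (star w ⬝ᵥ (A * Aᴴ) *ᵥ w).re = μ * ∑ k, ‖w k‖ ^ 2 := by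
      rw [hMw, dotProduct_smul, smul_eq_mul]
      rw [show ((μ : ℂ) * (star w ⬝ᵥ w)).re = μ * (star w ⬝ᵥ w).re by
        simp [Complex.mul_re]]
      rw [dot_self_re]
    have hpos : 0 < ∑ k, ‖w k‖ ^ 2 := by
      have hk : ∃ k, w k ≠ 0 := by
        by_contra h; push_neg at h; exact hw (funext h)
      rcases hk with ⟨k, hk⟩
      have : (0:ℝ) < ‖w k‖ ^ 2 := by
        have := norm_pos_iff.mpr hk
        positivity
      exact lt_of_lt_of_le this
        (Finset.single_le_sum (fun l _ => sq_nonneg ‖w l‖) (Finset.mem_univ k))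
    nlinarith [h1, h2.symm.le, h2.le]

lemma frobSq_conjTranspose {m n : Type*} [Fintype m] [Fintype n] (A : Matrix m n ℂ) :
    frobSq Aᴴ = frobSq A := by
  rw [frobSq, frobSq, Finset.sum_comm]
  simp [conjTranspose_apply]

lemma frobSq_mul_ge {L n : ℕ} (A : Matrix (Fin L) (Fin L) ℂ) (Y : Matrix (Fin L) (Fin n) ℂ)
    {c : ℝ} (hc : ∀ i, c ≤ (Matrix.isHermitian_conjTranspose_mul_self A).eigenvalues i) :
    c * frobSq Y ≤ frobSq (A * Y) := by
  rw [frobSq, frobSq,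
    show (∑ i, ∑ j, ‖Y i j‖ ^ 2) = ∑ j, ∑ i, ‖Y i j‖ ^ 2 from Finset.sum_comm,
    show (∑ i, ∑ j, ‖(A * Y) i j‖ ^ 2) = ∑ j, ∑ i, ‖(A * Y) i j‖ ^ 2 from Finset.sum_comm,
    Finset.mul_sum]
  refine Finset.sum_le_sum fun j _ => ?_
  set y : Fin L → ℂ := fun k => Y k j with hy
  have hcol : ∀ i, (A * Y) i j = (A *ᵥ y) i := fun i => by
    simp [mul_apply, mulVec, dotProduct, hy]
  have hid : star y ⬝ᵥ (Aᴴ * A) *ᵥ y = star (A *ᵥ y) ⬝ᵥ (A *ᵥ y) := by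
    rw [← mulVec_mulVec, dotProduct_mulVec, ← star_mulVec]
  have := rayleigh_lower (Matrix.isHermitian_conjTranspose_mul_self A) hc y
  rw [hid] at this
  calc c * ∑ i, ‖Y i j‖ ^ 2 ≤ (star (A *ᵥ y) ⬝ᵥ (A *ᵥ y)).re := this
    _ = ∑ i, ‖(A *ᵥ y) i‖ ^ 2 := dot_self_re _
    _ = ∑ i, ‖(A * Y) i j‖ ^ 2 := by simp_rw [hcol]

/-- Joint subspace accuracy bound: for a compact SVD `H = U Σ Vᴴ` and semi-unitary
`Û, V̂`, `η(Û,V̂) = ‖Ûᴴ H V̂‖_F²/tr(HᴴH) ≥ σ_L(Ûᴴ U)² σ_L(V̂ᴴ V)²`. -/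
theorem joint_subspace_accuracy_bound {Nr Nt L : ℕ} (hL : 0 < L)
    (H : Matrix (Fin Nr) (Fin Nt) ℂ)
    (U : Matrix (Fin Nr) (Fin L) ℂ) (s : Fin L → ℝ) (V : Matrix (Fin Nt) (Fin L) ℂ)
    (hU : Uᴴ * U = 1) (hV : Vᴴ * V = 1) (hs : ∀ i, 0 < s i)
    (hSVD : H = U * Matrix.diagonal (fun i => (s i : ℂ)) * Vᴴ)
    (Uhat : Matrix (Fin Nr) (Fin L) ℂ) (Vhat : Matrix (Fin Nt) (Fin L) ℂ)
    (hUhat : Uhatᴴ * Uhat = 1) (hVhat : Vhatᴴ * Vhat = 1) :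
    frobSq (Uhatᴴ * H * Vhat) / (Matrix.trace (Hᴴ * H)).re
      ≥ (svalDesc (Uhatᴴ * U) ⟨L - 1, by omega⟩) ^ 2 *
        (svalDesc (Vhatᴴ * V) ⟨L - 1, by omega⟩) ^ 2 := by
  set S : Matrix (Fin L) (Fin L) ℂ := Matrix.diagonal (fun i => (s i : ℂ)) with hS
  set A := Uhatᴴ * U with hA
  set B := Vhatᴴ * V with hB
  have hSH : Sᴴ = S := by
    rw [hS, diagonal_conjTranspose]
    refine congrArg Matrix.diagonal ?_
    funext i
    exact Complex.conj_ofReal (s i)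
  have hHH : Hᴴ * H = V * (Sᴴ * S) * Vᴴ := by
    rw [hSVD]
    simp only [conjTranspose_mul, conjTranspose_conjTranspose, Matrix.mul_assoc]
    rw [← Matrix.mul_assoc Uᴴ U (S * Vᴴ), hU, Matrix.one_mul]
  have hT : (Matrix.trace (Hᴴ * H)).re = ∑ i, s i ^ 2 := by
    rw [hHH, Matrix.trace_mul_comm (V * (Sᴴ * S)) Vᴴ, ← Matrix.mul_assoc, hV,
      Matrix.one_mul, hSH, hS, diagonal_mul_diagonal, trace_diagonal, Complex.re_sum]
    refine Finset.sum_congr rfl fun i _ => ?_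
    rw [← Complex.ofReal_mul, Complex.ofReal_re, sq]
  have hTpos : 0 < ∑ i, s i ^ 2 := by
    have : Nonempty (Fin L) := ⟨⟨0, hL⟩⟩
    exact Finset.sum_pos (fun i _ => pow_pos (hs i) 2) Finset.univ_nonempty
  have hprod : Uhatᴴ * H * Vhat = A * (S * Bᴴ) := by
    rw [hSVD, hA, hB, conjTranspose_mul]
    simp only [conjTranspose_conjTranspose, Matrix.mul_assoc]
  have hfs : frobSq S = ∑ i, s i ^ 2 := by
    rw [frobSq, hS]
    refine Finset.sum_congr rfl fun i _ => ?_
    rw [Finset.sum_eq_single i (fun j _ hj => by simp [diagonal_apply_ne' _ hj])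
      (fun h => absurd (Finset.mem_univ i) h)]
    simp [diagonal_apply_eq, sq_abs]
  set a := svalDesc A ⟨L - 1, by omega⟩ ^ 2 with ha
  set b := svalDesc B ⟨L - 1, by omega⟩ ^ 2 with hb
  have ha0 : 0 ≤ a := sq_nonneg _
  have step1 : a * frobSq (S * Bᴴ) ≤ frobSq (A * (S * Bᴴ)) :=
    frobSq_mul_ge A _ (transfer A (fun j => sval_sq_le_eig hL A j))
  have step2 : frobSq (S * Bᴴ) = frobSq (B * S) := by
    rw [← frobSq_conjTranspose (S * Bᴴ), conjTranspose_mul, conjTranspose_conjTranspose, hSH]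
  have step3 : b * frobSq S ≤ frobSq (B * S) :=
    frobSq_mul_ge B S (transfer B (fun j => sval_sq_le_eig hL B j))
  rw [ge_iff_le, hT, le_div_iff₀ hTpos]
  calc a * b * (∑ i, s i ^ 2) = a * (b * frobSq S) := by rw [hfs]; ring
    _ ≤ a * frobSq (B * S) := mul_le_mul_of_nonneg_left step3 ha0
    _ = a * frobSq (S * Bᴴ) := by rw [step2]
    _ ≤ frobSq (A * (S * Bᴴ)) := step1
    _ = frobSq (Uhatᴴ * H * Vhat) := by rw [hprod]
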